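/- For t ∈ C(C{a,b}): if no node of t is of kind 1, every subtree of t has a port, and some node of t is of kind 2, then μ(t) is of kind 2. -/

import Mathlib

namespace OmegaClone

/-- A (possibly infinite) raw tree over a ranked set `A`, with ports.
Positions are lists of child indices; a node is labeled either by a letter
`⟨k, x⟩` (a letter `x` of rank `k`, having `k` children `0,…,k-1`) or by a
port name `j ∈ ℕ` (a leaf). `none` means the position is not a node. -/
def RawTree (A : ℕ → Type) : Type :=
  List ℕ → Option ((Σ k : ℕ, A k) ⊕ ℕ)

/-- `t` is a term of rank `n` over `A` (an element of rank `n` of `CA`):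
the root exists and is not a port (excluding the trivial port-tree), a
position `w ++ [i]` is a node iff `w` is labeled by a letter of rank `> i`,
all port names are `< n`, and every port name `< n` occurs. -/
def IsTerm (A : ℕ → Type) (n : ℕ) (t : RawTree A) : Prop :=
  (∃ k x, t [] = some (Sum.inl ⟨k, x⟩)) ∧
  (∀ w i, (t (w ++ [i])).isSome ↔ ∃ k x, t w = some (Sum.inl ⟨k, x⟩) ∧ i < k) ∧
  (∀ w j, t w = some (Sum.inr j) → j < n) ∧
  (∀ j, j < n → ∃ w, t w = some (Sum.inr j))

/-- Trees whose node labels are themselves raw trees over `A`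
(i.e. raw trees over the ranked set `CA`). -/
abbrev OuterTree (A : ℕ → Type) : Type := RawTree (fun _ => RawTree A)

/-- `t ∈ C(CA)` has rank `n`: it is a term of rank `n` whose node labels are
terms of the rank given by the arity of the node. -/
def IsTerm2 (A : ℕ → Type) (n : ℕ) (t : OuterTree A) : Prop :=
  IsTerm (fun _ => RawTree A) n t ∧
  ∀ w k s, t w = some (Sum.inl ⟨k, s⟩) → IsTerm A k s

/-- Auxiliary state for computing the flattening: either a pair
(node `v` of the outer tree, position `w` inside the label of `v`),
or a port name of the outer tree. -/
def resolve (A : ℕ → Type) (t : OuterTree A) (v : List ℕ) :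
    Option ((List ℕ × List ℕ) ⊕ ℕ) :=
  match t v with
  | some (Sum.inl _) => some (Sum.inl (v, ([] : List ℕ)))
  | some (Sum.inr j) => some (Sum.inr j)
  | none => none

/-- One navigation step of the flattening: from the current state, move to
child number `i`; a port `j` occurring inside a label redirects to the
`j`-th child of the current outer node (substitution). -/
def stepF (A : ℕ → Type) (t : OuterTree A)
    (st : (List ℕ × List ℕ) ⊕ ℕ) (i : ℕ) :
    Option ((List ℕ × List ℕ) ⊕ ℕ) :=
  match st with
  | Sum.inr _ => none
  | Sum.inl (v, w) =>
    match t v with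
    | some (Sum.inl ⟨_, s⟩) =>
      match s (w ++ [i]) with
      | some (Sum.inl _) => some (Sum.inl (v, w ++ [i]))
      | some (Sum.inr j) => resolve A t (v ++ [j])
      | none => none
    | _ => none

/-- The flattening `μ : C(CA) → CA`: the label of `μ(t)` at a position `p` is
obtained by navigating through `t`, substituting (recursively) the flattened
child subtrees of each node into the ports of its label. -/
def flatten (A : ℕ → Type) (t : OuterTree A) : RawTree A :=
  fun p =>
    (p.foldl (fun ost i => ost.bind (fun st => stepF A t st i))
        (resolve A t [])).bind
      (fun st =>
        match st with
        | Sum.inl (v, w) =>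
          match t v with
          | some (Sum.inl ⟨_, s⟩) =>
            match s w with
            | some (Sum.inl x) => some (Sum.inl x)
            | _ => none
          | _ => none
        | Sum.inr j => some (Sum.inr j))

/-- The unit `η : A → CA`: a letter of rank `k` becomes the term with that
letter at the root and ports `0,…,k-1` as its children. -/
def unitRaw (A : ℕ → Type) (k : ℕ) (x : A k) : RawTree A :=
  fun p =>
    match p with
    | [] => some (Sum.inl ⟨k, x⟩)
    | [i] => if i < k then some (Sum.inr i) else none
    | _ => none

/-- Action of `C` on (rank-preserving) functions: node-wise relabeling. -/
def cmap {A B : ℕ → Type} (h : ∀ k, A k → B k) (t : RawTree A) : RawTree B :=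
  fun p => (t p).map (Sum.map (fun x => ⟨x.1, h x.1 x.2⟩) id)

/-- The subtree of `t` rooted at node `w`. -/
def subAt {A : ℕ → Type} (t : RawTree A) (w : List ℕ) : RawTree A :=
  fun u => t (w ++ u)

/-- `t` contains a port. -/
def HasPort {A : ℕ → Type} (t : RawTree A) : Prop :=
  ∃ w j, t w = some (Sum.inr j)

/-- every subtree of `t` contains a port -/
def HasPortEverywhere {A : ℕ → Type} (t : RawTree A) : Prop :=
  ∀ w, (t w).isSome → HasPort (subAt t w)

/-- some port name occurs at least twice in `t` -/
def PortTwice {A : ℕ → Type} (t : RawTree A) : Prop :=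
  ∃ w w' j, w ≠ w' ∧ t w = some (Sum.inr j) ∧ t w' = some (Sum.inr j)

/-- subtrees at distinct nodes of `t` are distinct -/
def Antiregular {A : ℕ → Type} (t : RawTree A) : Prop :=
  ∀ w w', (t w).isSome → (t w').isSome → subAt t w = subAt t w' → w = w'

/-- every node of `t` has a descendant whose subtree is antiregular -/
def DenselyAntiregular {A : ℕ → Type} (t : RawTree A) : Prop :=
  ∀ w, (t w).isSome → ∃ u, (t (w ++ u)).isSome ∧ Antiregular (subAt t (w ++ u))

/-- the ranked alphabet `{a,b}`, both letters of rank `2` -/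
inductive AB : Type | a : AB | b : AB

def abA : ℕ → Type
  | 2 => AB
  | _ => Empty

/-- kind 1: some subtree has no ports and is not densely antiregular -/
def Kind1 (s : RawTree abA) : Prop :=
  ∃ w, (s w).isSome ∧ ¬ HasPort (subAt s w) ∧ ¬ DenselyAntiregular (subAt s w)

/-- kind 2: some subtree has no ports and every portless subtree is densely antiregular -/
def Kind2 (s : RawTree abA) : Prop :=
  (∃ w, (s w).isSome ∧ ¬ HasPort (subAt s w)) ∧
  ∀ w, (s w).isSome → ¬ HasPort (subAt s w) → DenselyAntiregular (subAt s w)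

/-- kind 3: every subtree has a port and some port name is used at least twice -/
def Kind3 (s : RawTree abA) : Prop :=
  HasPortEverywhere s ∧ PortTwice s

/-- kind 4: every subtree has a port and no port name is used twice -/
def Kind4 (s : RawTree abA) : Prop :=
  HasPortEverywhere s ∧ ¬ PortTwice s

end OmegaClone

namespace OmegaClone



section Aux

variable {A : ℕ → Type}

/-- sufficient well-formedness of an outer tree for navigation lemmas -/
def Good (A : ℕ → Type) (t : OuterTree A) : Prop :=
  (∃ k x, t [] = some (Sum.inl ⟨k, x⟩)) ∧
  (∀ w i, (t (w ++ [i])).isSome ↔ ∃ k x, t w = some (Sum.inl ⟨k, x⟩) ∧ i < k) ∧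
  (∀ w k s, t w = some (Sum.inl ⟨k, s⟩) → IsTerm A k s)

theorem good_of_isTerm2 {n : ℕ} {t : OuterTree A} (h : IsTerm2 A n t) : Good A t :=
  ⟨h.1.1, h.1.2.1, fun w k s hw => h.2 w k s hw⟩

theorem good_subAt {t : OuterTree A} {v : List ℕ} {k : ℕ} {s : RawTree A}
    (hg : Good A t) (hv : t v = some (Sum.inl ⟨k, s⟩)) : Good A (subAt t v) := by
  refine ⟨⟨k, s, by simpa [subAt] using hv⟩, fun w i => ?_, fun w k' s' hw => ?_⟩
  · simpa [subAt, List.append_assoc] using hg.2.1 (v ++ w) i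
  · exact hg.2.2 (v ++ w) k' s' (by simpa [subAt] using hw)

theorem label_inj {t : OuterTree A} {v : List ℕ} {k k' : ℕ} {s s' : RawTree A}
    (h1 : t v = some (Sum.inl ⟨k, s⟩)) (h2 : t v = some (Sum.inl ⟨k', s'⟩)) :
    k = k' ∧ s = s' := by
  rw [h1] at h2
  injection h2 with h2
  injection h2 with h2
  injection h2 with hk hs
  exact ⟨hk, hs⟩

/-- proper prefixes of defined positions are letters -/
theorem letter_of_isSome_append {B : ℕ → Type} {t : RawTree B}
    (hc : ∀ w i, (t (w ++ [i])).isSome ↔ ∃ k x, t w = some (Sum.inl ⟨k, x⟩) ∧ i < k)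
    (w : List ℕ) :
    ∀ (u : List ℕ) (i : ℕ), (t (w ++ u ++ [i])).isSome →
      ∃ k x, t w = some (Sum.inl ⟨k, x⟩) := by
  intro u
  induction u using List.reverseRecOn with
  | nil =>
    intro i h
    obtain ⟨k, x, hx, -⟩ := (hc w i).mp (by simpa using h)
    exact ⟨k, x, hx⟩
  | append_singleton u i' ih =>
    intro i h
    have h' : (t ((w ++ u ++ [i']) ++ [i])).isSome := by
      simpa [List.append_assoc] using h
    obtain ⟨k, x, hx, -⟩ := (hc (w ++ u ++ [i']) i).mp h'
    exact ih i' (by simp only [hx, Option.isSome_some])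

def nav (A : ℕ → Type) (t : OuterTree A) (p : List ℕ) :
    Option ((List ℕ × List ℕ) ⊕ ℕ) :=
  p.foldl (fun ost i => ost.bind (fun st => stepF A t st i)) (resolve A t [])

theorem flatten_def (t : OuterTree A) (p : List ℕ) :
    flatten A t p = (nav A t p).bind (fun st =>
      match st with
      | Sum.inl (v, w) =>
        match t v with
        | some (Sum.inl ⟨_, s⟩) =>
          match s w with
          | some (Sum.inl x) => some (Sum.inl x)
          | _ => none
        | _ => none
      | Sum.inr j => some (Sum.inr j)) := rfl

theorem nav_nil (t : OuterTree A) : nav A t [] = resolve A t [] := rfl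

theorem nav_append (t : OuterTree A) (p : List ℕ) (i : ℕ) :
    nav A t (p ++ [i]) = (nav A t p).bind (fun st => stepF A t st i) := by
  simp [nav, List.foldl_append]

/-- navigation state invariant -/
theorem nav_inl_wf {t : OuterTree A} (hg : Good A t) :
    ∀ (p v w : List ℕ), nav A t p = some (Sum.inl (v, w)) →
      ∃ k s, t v = some (Sum.inl ⟨k, s⟩) ∧ ∃ k' x, s w = some (Sum.inl ⟨k', x⟩) := by
  intro p
  induction p using List.reverseRecOn with
  | nil =>
    intro v w hp
    obtain ⟨k, s, hs⟩ := hg.1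
    rw [nav_nil] at hp
    simp only [resolve, hs, Option.some.injEq, Sum.inl.injEq, Prod.mk.injEq] at hp
    obtain ⟨hv, hw⟩ := hp
    obtain ⟨k', x, hx⟩ := (hg.2.2 [] k s hs).1
    exact ⟨k, s, by rw [← hv]; exact hs, k', x, by rw [← hw]; exact hx⟩
  | append_singleton p i ih =>
    intro v w hp
    rw [nav_append] at hp
    cases hnp : nav A t p with
    | none => rw [hnp] at hp; simp at hp
    | some st =>
      rw [hnp, Option.bind_some] at hp
      cases st with
      | inr j => simp [stepF] at hp
      | inl vw =>
        obtain ⟨v0, w0⟩ := vw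
        obtain ⟨k, s, hv0, k', x, hw0⟩ := ih v0 w0 hnp
        cases hsw : s (w0 ++ [i]) with
        | none => simp [stepF, hv0, hsw] at hp
        | some y =>
          cases y with
          | inl y' =>
            simp only [stepF, hv0, hsw, Option.some.injEq, Sum.inl.injEq,
              Prod.mk.injEq] at hp
            obtain ⟨hv, hw⟩ := hp
            exact ⟨k, s, by rw [← hv]; exact hv0, y'.1, y'.2, by rw [← hw]; exact hsw⟩
          | inr j =>
            cases htj : t (v0 ++ [j]) with
            | none => simp [stepF, hv0, hsw, resolve, htj] at hp
            | some z =>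
              cases z with
              | inr j' => simp [stepF, hv0, hsw, resolve, htj] at hp
              | inl ks =>
                obtain ⟨k2, s2⟩ := ks
                simp only [stepF, hv0, hsw, resolve, htj, Option.some.injEq,
                  Sum.inl.injEq, Prod.mk.injEq] at hp
                obtain ⟨hv, hw⟩ := hp
                obtain ⟨k3, x3, hx3⟩ := (hg.2.2 (v0 ++ [j]) k2 s2 htj).1
                exact ⟨k2, s2, by rw [← hv]; exact htj, k3, x3, by rw [← hw]; exact hx3⟩

/-- navigation inside a node label -/
theorem nav_inner {t : OuterTree A} (hg : Good A t) {p v w : List ℕ} {k : ℕ}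
    {s : RawTree A}
    (hp : nav A t p = some (Sum.inl (v, w))) (hv : t v = some (Sum.inl ⟨k, s⟩)) :
    ∀ u : List ℕ, (s (w ++ u)).isSome →
      nav A t (p ++ u) =
        (match s (w ++ u) with
        | some (Sum.inl _) => some (Sum.inl (v, w ++ u))
        | some (Sum.inr j) => resolve A t (v ++ [j])
        | none => none) := by
  have hterm : IsTerm A k s := hg.2.2 v k s hv
  intro u
  induction u using List.reverseRecOn with
  | nil =>
    intro _
    obtain ⟨k1, s1, hv1, k2, x2, hw2⟩ := nav_inl_wf hg p v w hp
    obtain ⟨hk, hs⟩ := label_inj hv1 hv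
    subst hs
    simp only [List.append_nil, hw2]
    exact hp
  | append_singleton u i ih =>
    intro hsome
    obtain ⟨k1, x1, hx1⟩ := letter_of_isSome_append hterm.2.1 (w ++ u) [] i
      (by simpa [List.append_assoc] using hsome)
    have hprev : nav A t (p ++ u) = some (Sum.inl (v, w ++ u)) := by
      simp only [ih (by simp only [hx1, Option.isSome_some]), hx1]
    rw [← List.append_assoc, nav_append, hprev, Option.bind_some]
    cases hsw : s (w ++ (u ++ [i])) with
    | none => simp [stepF, hv, List.append_assoc, hsw]
    | some y =>
      cases y with
      | inl y' => simp [stepF, hv, List.append_assoc, hsw]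
      | inr j => simp [stepF, hv, List.append_assoc, hsw]

/-- navigation inside a portless label subtree never leaves it -/
theorem nav_noport {t : OuterTree A} (hg : Good A t) {p v w : List ℕ} {k : ℕ}
    {s : RawTree A}
    (hp : nav A t p = some (Sum.inl (v, w))) (hv : t v = some (Sum.inl ⟨k, s⟩))
    (hnp : ∀ u j, s (w ++ u) ≠ some (Sum.inr j)) :
    ∀ u : List ℕ, nav A t (p ++ u) =
      (match s (w ++ u) with
      | some (Sum.inl _) => some (Sum.inl (v, w ++ u))
      | _ => none) := by
  have hterm : IsTerm A k s := hg.2.2 v k s hv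
  intro u
  induction u using List.reverseRecOn with
  | nil =>
    obtain ⟨k1, s1, hv1, k2, x2, hw2⟩ := nav_inl_wf hg p v w hp
    obtain ⟨hk, hs⟩ := label_inj hv1 hv
    subst hs
    simp only [List.append_nil, hw2]
    exact hp
  | append_singleton u i ih =>
    rw [← List.append_assoc, nav_append]
    cases hsw : s (w ++ u) with
    | none =>
      have ihe : nav A t (p ++ u) = none := by simp only [ih, hsw]
      rw [ihe, Option.bind_none]
      cases hsw2 : s (w ++ (u ++ [i])) with
      | none => rfl
      | some y =>
        exfalso
        have hy : (s (w ++ u ++ [i])).isSome := by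
          rw [List.append_assoc, hsw2]; rfl
        obtain ⟨k1, x1, hx1, -⟩ := (hterm.2.1 (w ++ u) i).mp hy
        rw [hsw] at hx1
        exact Option.noConfusion rfl (heq_of_eq hx1)
    | some y =>
      cases y with
      | inr j => exact absurd hsw (hnp u j)
      | inl y' =>
        have ihe : nav A t (p ++ u) = some (Sum.inl (v, w ++ u)) := by
          simp only [ih, hsw]
        rw [ihe, Option.bind_some]
        cases hsw2 : s (w ++ (u ++ [i])) with
        | none => simp [stepF, hv, List.append_assoc, hsw2]
        | some z =>
          cases z with
          | inl z' => simp [stepF, hv, List.append_assoc, hsw2]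
          | inr j => exact absurd hsw2 (hnp (u ++ [i]) j)

/-- translation of navigation states from a subtree to the whole tree -/
def tau (v : List ℕ) : (List ℕ × List ℕ) ⊕ ℕ → (List ℕ × List ℕ) ⊕ ℕ
  | Sum.inl (x, w) => Sum.inl (v ++ x, w)
  | Sum.inr j => Sum.inr j

theorem resolve_subAt (t : OuterTree A) (v x : List ℕ) :
    resolve A t (v ++ x) = Option.map (tau v) (resolve A (subAt t v) x) := by
  cases h : t (v ++ x) with
  | none => simp [resolve, subAt, h]
  | some y =>
    cases y with
    | inl ks => simp [resolve, subAt, h, tau]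
    | inr j => simp [resolve, subAt, h, tau]

theorem stepF_subAt (t : OuterTree A) (v : List ℕ)
    (st : (List ℕ × List ℕ) ⊕ ℕ) (i : ℕ) :
    stepF A t (tau v st) i = Option.map (tau v) (stepF A (subAt t v) st i) := by
  cases st with
  | inr j => rfl
  | inl xw =>
    obtain ⟨x, w⟩ := xw
    show stepF A t (Sum.inl (v ++ x, w)) i = _
    cases h : t (v ++ x) with
    | none => simp [stepF, subAt, h]
    | some y =>
      cases y with
      | inr j => simp [stepF, subAt, h]
      | inl ks =>
        obtain ⟨k, s⟩ := ks
        cases hs : s (w ++ [i]) with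
        | none => simp [stepF, subAt, h, hs]
        | some z =>
          cases z with
          | inl z' => simp [stepF, subAt, h, hs, tau]
          | inr j =>
            simp only [stepF, subAt, h, hs]
            rw [List.append_assoc]
            exact resolve_subAt t v (x ++ [j])

theorem nav_subAt {t : OuterTree A} {p v : List ℕ} {k : ℕ} {s : RawTree A}
    (hp : nav A t p = some (Sum.inl (v, [])))
    (hv : t v = some (Sum.inl ⟨k, s⟩)) :
    ∀ u : List ℕ, nav A t (p ++ u) = Option.map (tau v) (nav A (subAt t v) u) := by
  intro u
  induction u using List.reverseRecOn with
  | nil =>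
    rw [List.append_nil, nav_nil]
    have hsub : subAt t v [] = some (Sum.inl ⟨k, s⟩) := by simpa [subAt] using hv
    have ht : tau v (Sum.inl ([], [])) = Sum.inl (v ++ [], ([] : List ℕ)) := rfl
    simp only [resolve, hsub, Option.map_some]
    rw [ht]
    simpa using hp
  | append_singleton u i ih =>
    rw [← List.append_assoc, nav_append, ih, nav_append]
    cases h : nav A (subAt t v) u with
    | none => rfl
    | some st =>
      simp only [Option.map_some, Option.bind_some]
      exact stepF_subAt t v st i

theorem flatten_subAt {t : OuterTree A} {p v : List ℕ} {k : ℕ} {s : RawTree A}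
    (hp : nav A t p = some (Sum.inl (v, [])))
    (hv : t v = some (Sum.inl ⟨k, s⟩)) :
    subAt (flatten A t) p = flatten A (subAt t v) := by
  funext u
  show flatten A t (p ++ u) = flatten A (subAt t v) u
  rw [flatten_def, flatten_def, nav_subAt hp hv u]
  cases h : nav A (subAt t v) u with
  | none => rfl
  | some st =>
    cases st with
    | inr j => rfl
    | inl xw =>
      obtain ⟨x, w⟩ := xw
      have ht : tau v (Sum.inl (x, w)) = Sum.inl (v ++ x, w) := rfl
      simp only [Option.map_some, Option.bind_some]
      rw [ht]
      cases h2 : t (v ++ x) with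
      | none => simp [subAt, h2]
      | some y =>
        cases y with
        | inr j => simp [subAt, h2]
        | inl ks =>
          obtain ⟨k2, s2⟩ := ks
          simp [subAt, h2]

/-- every node of the outer tree is reachable by navigation -/
theorem nav_reach {t : OuterTree A} (hg : Good A t) :
    ∀ v : List ℕ, (t v).isSome → ∃ p, nav A t p = resolve A t v := by
  intro v
  induction v using List.reverseRecOn with
  | nil => exact fun _ => ⟨[], rfl⟩
  | append_singleton v0 i ih =>
    intro hsome
    obtain ⟨k, s, hv0, hik⟩ := (hg.2.1 v0 i).mp hsome
    obtain ⟨p0, hp0⟩ := ih (by simp [hv0])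
    have hres : resolve A t v0 = some (Sum.inl (v0, [])) := by
      simp [resolve, hv0]
    rw [hres] at hp0
    have hterm : IsTerm A k s := hg.2.2 v0 k s hv0
    obtain ⟨w, hw⟩ := hterm.2.2.2 i hik
    have hnavw := nav_inner hg hp0 hv0 w (by simp [hw])
    refine ⟨p0 ++ w, ?_⟩
    rw [hnavw]
    simp only [List.nil_append, hw]

theorem hasPort_flatten {t : OuterTree A} (hg : Good A t)
    (h : ∃ u j, t u = some (Sum.inr j)) : HasPort (flatten A t) := by
  obtain ⟨u, j, hu⟩ := h
  obtain ⟨p, hp⟩ := nav_reach hg u (by simp [hu])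
  refine ⟨p, j, ?_⟩
  simp only [flatten_def, hp, resolve, hu, Option.bind_some]

theorem hasPort_mono {B : ℕ → Type} {x : RawTree B} {w u : List ℕ}
    (h : HasPort (subAt x (w ++ u))) : HasPort (subAt x w) := by
  obtain ⟨w', j, hw'⟩ := h
  refine ⟨u ++ w', j, ?_⟩
  show x (w ++ (u ++ w')) = _
  rw [← List.append_assoc]
  exact hw'

/-- a portless subtree of the flattening equals a subtree of a node label -/
theorem subAt_flatten_eq {t : OuterTree A} (hg : Good A t) {p v w : List ℕ}
    {k : ℕ} {s : RawTree A}
    (hp : nav A t p = some (Sum.inl (v, w))) (hv : t v = some (Sum.inl ⟨k, s⟩))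
    (hnp : ∀ u j, s (w ++ u) ≠ some (Sum.inr j)) :
    subAt (flatten A t) p = subAt s w := by
  funext u
  show flatten A t (p ++ u) = s (w ++ u)
  rw [flatten_def, nav_noport hg hp hv hnp u]
  cases h : s (w ++ u) with
  | none => simp [h]
  | some y =>
    cases y with
    | inr j => exact absurd h (hnp u j)
    | inl y' => simp [h, hv]

end Aux

/-- Corollary, case (d): if no node of `t` is of kind 1, every
subtree of `t` has a port, and some node of `t` is of kind 2, then `μ(t)` is of
kind 2. -/
theorem flatten_kind2
    (n : ℕ) (t : OuterTree abA) (ht : IsTerm2 abA n t)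
    (h1 : ∀ (v : List ℕ) (k : ℕ) (r : RawTree abA),
        t v = some (Sum.inl ⟨k, r⟩) → ¬ Kind1 r)
    (h2 : HasPortEverywhere t)
    (h3 : ∃ (v : List ℕ) (k : ℕ) (r : RawTree abA),
        t v = some (Sum.inl ⟨k, r⟩) ∧ Kind2 r) :
    Kind2 (flatten abA t) := by
  have hg : Good abA t := good_of_isTerm2 ht
  -- key: if the subtree of the flattening at a reached label position is portless,
  -- then the label subtree there is portless
  have key : ∀ (p v w : List ℕ) (k : ℕ) (s : RawTree abA),
      nav abA t p = some (Sum.inl (v, w)) → t v = some (Sum.inl ⟨k, s⟩) →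
      ¬ HasPort (subAt (flatten abA t) p) →
      ∀ u j, s (w ++ u) ≠ some (Sum.inr j) := by
    intro p v w k s hp hv hport u j hsw
    have hterm : IsTerm abA k s := hg.2.2 v k s hv
    have hjk : j < k := hterm.2.2.1 (w ++ u) j hsw
    have hnav : nav abA t (p ++ u) = resolve abA t (v ++ [j]) := by
      rw [nav_inner hg hp hv u (by simp [hsw]), hsw]
    have hsome : (t (v ++ [j])).isSome := (hg.2.1 v j).mpr ⟨k, s, hv, hjk⟩
    cases htj : t (v ++ [j]) with
    | none => rw [htj] at hsome; simp at hsome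
    | some y =>
      cases y with
      | inr j' =>
        apply hport
        refine ⟨u, j', ?_⟩
        show flatten abA t (p ++ u) = _
        simp only [flatten_def, hnav, resolve, htj, Option.bind_some]
      | inl ks =>
        obtain ⟨k2, s2⟩ := ks
        have hres : nav abA t (p ++ u) = some (Sum.inl (v ++ [j], [])) := by
          rw [hnav]; simp [resolve, htj]
        have heq : subAt (flatten abA t) (p ++ u) = flatten abA (subAt t (v ++ [j])) :=
          flatten_subAt hres htj
        apply hport
        apply hasPort_mono (u := u)
        rw [heq]
        exact hasPort_flatten (good_subAt hg htj) (h2 (v ++ [j]) hsome)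
  constructor
  · -- existence of a portless subtree of the flattening
    obtain ⟨v, k, r, hv, ⟨⟨w, hwsome, hwport⟩, -⟩⟩ := h3
    obtain ⟨p, hp⟩ := nav_reach hg v (by simp [hv])
    have hres : resolve abA t v = some (Sum.inl (v, [])) := by
      simp [resolve, hv]
    rw [hres] at hp
    obtain ⟨kw, xw, hxw⟩ : ∃ kw xw, r w = some (Sum.inl ⟨kw, xw⟩) := by
      cases hrw : r w with
      | none => rw [hrw] at hwsome; simp at hwsome
      | some y =>
        cases y with
        | inl y' => obtain ⟨kw, xw⟩ := y'; exact ⟨kw, xw, rfl⟩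
        | inr j => exact absurd ⟨[], j, by simpa [subAt] using hrw⟩ hwport
    have hnavw : nav abA t (p ++ w) = some (Sum.inl (v, w)) := by
      have hnw := nav_inner hg hp hv w (by simp [hxw])
      simp only [List.nil_append] at hnw
      rw [hnw]
      simp only [hxw]
    have hnp : ∀ u j, r (w ++ u) ≠ some (Sum.inr j) := by
      intro u j hu
      exact hwport ⟨u, j, hu⟩
    have heq : subAt (flatten abA t) (p ++ w) = subAt r w :=
      subAt_flatten_eq hg hnavw hv hnp
    refine ⟨p ++ w, ?_, ?_⟩
    · have hfl : flatten abA t (p ++ w) = subAt r w [] := by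
        have hcf := congrFun heq []
        simpa [subAt] using hcf
      rw [hfl]
      simp [subAt, hxw]
    · rw [heq]; exact hwport
  · -- every portless subtree of the flattening is densely antiregular
    intro p hpsome hport
    rw [flatten_def] at hpsome
    cases hnav : nav abA t p with
    | none => rw [hnav] at hpsome; simp at hpsome
    | some st =>
      cases st with
      | inr j =>
        exfalso
        apply hport
        refine ⟨[], j, ?_⟩
        show flatten abA t (p ++ []) = _
        rw [List.append_nil, flatten_def, hnav]
        rfl
      | inl vw =>
        obtain ⟨v, w⟩ := vw
        obtain ⟨k, s, hv, kw, xw, hxw⟩ := nav_inl_wf hg p v w hnav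
        have hnp : ∀ u j, s (w ++ u) ≠ some (Sum.inr j) :=
          key p v w k s hnav hv hport
        have heq : subAt (flatten abA t) p = subAt s w :=
          subAt_flatten_eq hg hnav hv hnp
        rw [heq]
        have hnk1 : ¬ Kind1 s := h1 v k s hv
        have hnport : ¬ HasPort (subAt s w) := by
          rintro ⟨u, j, hu⟩
          exact hnp u j hu
        by_contra hda
        exact hnk1 ⟨w, by simp [hxw], hnport, hda⟩

end OmegaClone
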